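/- For the unit ball K = {y ∈ ℝ^d : ‖y‖₂ ≤ 1} and the degree-one Fekete points given by the rows of X_d, the Lebesgue constant Λ₁ = max_{‖y‖₂ ≤ 1} Σ_{j=1}^{d+1} |λ_j(y)| satisfies √d ≤ Λ₁ ≤ √(d+1) for every d ≥ 1. -/

import Mathlib

open Matrix

/-- The recursively defined matrix `X_d ∈ ℝ^{(d+1)×d}` whose rows are the vertices of a
regular simplex inscribed in the unit sphere of `ℝ^d`:  `X_1 = (-1; 1)`, and for `d > 1`,
the top-left `d × (d-1)` block of `X_d` is `R_d • X_{d-1}` with `R_d = √(d²-1)/d`, the last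
column has its first `d` entries equal to `-1/d` and last entry `1`, and the last row is
`(0, …, 0, 1)`. -/
noncomputable def simplexPts : (d : ℕ) → Matrix (Fin (d + 1)) (Fin d) ℝ
  | 0 => fun _ j => j.elim0
  | 1 => fun i _ => if (i : ℕ) = 0 then -1 else 1
  | (d + 2) => fun i j =>
      if hj : (j : ℕ) < d + 1 then
        if hi : (i : ℕ) < d + 2 then
          (Real.sqrt (((d : ℝ) + 2) ^ 2 - 1) / ((d : ℝ) + 2)) *
            simplexPts (d + 1) ⟨i, hi⟩ ⟨j, hj⟩
        else 0
      else if (i : ℕ) < d + 2 then -1 / ((d : ℝ) + 2) else 1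

/-- The barycentric coordinates of `y ∈ ℝ^d` with respect to the rows of `X_d`:
`λ(y) = (1/(d+1)) 𝟙_{d+1} + (d/(d+1)) X_d y`.  These are also the values at `y` of the
degree-one fundamental Lagrange polynomials for interpolation at the rows of `X_d`. -/
noncomputable def bary (d : ℕ) (y : Fin d → ℝ) : Fin (d + 1) → ℝ :=
  fun i => 1 / ((d : ℝ) + 1) + ((d : ℝ) / ((d : ℝ) + 1)) * (simplexPts d *ᵥ y) i


lemma Rsq (d : ℕ) : Real.sqrt (((d : ℝ) + 2) ^ 2 - 1) ^ 2 = ((d : ℝ) + 2) ^ 2 - 1 := by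
  rw [Real.sq_sqrt]; nlinarith [Nat.cast_nonneg (α := ℝ) d]

lemma colsum : ∀ (d : ℕ) (k : Fin d), ∑ i, simplexPts d i k = 0
  | 0, k => k.elim0
  | 1, k => by simp [simplexPts, Fin.sum_univ_succ]
  | (d+2), k => by
    rw [Fin.sum_univ_castSucc]
    by_cases hk : (k : ℕ) < d + 1
    · have h1 : ∀ i : Fin (d+2), simplexPts (d+2) i.castSucc k =
        (Real.sqrt (((d : ℝ) + 2) ^ 2 - 1) / ((d : ℝ) + 2)) *
          simplexPts (d + 1) i ⟨k, hk⟩ := by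
        intro i
        simp [simplexPts, hk, i.isLt]
      have h2 : simplexPts (d+2) (Fin.last (d+2)) k = 0 := by
        simp [simplexPts, hk]
      rw [h2]
      simp only [h1]
      rw [← Finset.mul_sum, colsum (d+1) ⟨k, hk⟩]
      simp
    · have h1 : ∀ i : Fin (d+2), simplexPts (d+2) i.castSucc k = -1 / ((d:ℝ)+2) := by
        intro i; simp [simplexPts, hk, i.isLt]
      have h2 : simplexPts (d+2) (Fin.last (d+2)) k = 1 := by
        simp [simplexPts, hk]
      rw [h2]; simp only [h1]
      rw [Finset.sum_const]
      simp only [Finset.card_univ, Fintype.card_fin, nsmul_eq_mul]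
      push_cast
      have : ((d:ℝ)+2) ≠ 0 := by positivity
      field_simp
      ring

lemma gramCol : ∀ (d : ℕ) (k l : Fin d),
    ∑ i, simplexPts d i k * simplexPts d i l = if k = l then ((d:ℝ)+1)/d else 0
  | 0, k, _ => k.elim0
  | 1, k, l => by
    fin_cases k; fin_cases l
    simp [simplexPts, Fin.sum_univ_succ]
  | (d+2), k, l => by
    set R := Real.sqrt (((d : ℝ) + 2) ^ 2 - 1) / ((d : ℝ) + 2) with hR
    have hRsq : R ^ 2 = (((d:ℝ)+2)^2 - 1) / ((d:ℝ)+2)^2 := by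
      rw [hR, div_pow, Rsq]
    have hd2 : ((d:ℝ)+2) ≠ 0 := by positivity
    have hd1 : ((d:ℝ)+1) ≠ 0 := by positivity
    rw [Fin.sum_univ_castSucc]
    by_cases hk : (k : ℕ) < d + 1 <;> by_cases hl : (l : ℕ) < d + 1
    · have h1 : ∀ i : Fin (d+2),
          simplexPts (d+2) i.castSucc k * simplexPts (d+2) i.castSucc l =
          R^2 * (simplexPts (d+1) i ⟨k, hk⟩ * simplexPts (d+1) i ⟨l, hl⟩) := by
        intro i; simp [simplexPts, hk, hl, i.isLt, hR]; ring
      have h2 : simplexPts (d+2) (Fin.last (d+2)) k * simplexPts (d+2) (Fin.last (d+2)) l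
          = 0 := by simp [simplexPts, hk]
      rw [h2]; simp only [h1]
      rw [← Finset.mul_sum, gramCol (d+1) ⟨k, hk⟩ ⟨l, hl⟩]
      have hkl : (k = l) ↔ ((⟨k, hk⟩ : Fin (d+1)) = ⟨l, hl⟩) := by
        constructor <;> intro h
        · simp [h]
        · have := Fin.mk.injEq (n := d+1) k hk l hl ▸ h
          exact Fin.ext (by simpa using h)
      by_cases h : k = l
      · rw [if_pos h, if_pos (hkl.mp h), hRsq]
        push_cast
        field_simp
        ring
      · rw [if_neg h, if_neg (fun hh => h (hkl.mpr hh))]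
        simp
    · have h1 : ∀ i : Fin (d+2),
          simplexPts (d+2) i.castSucc k * simplexPts (d+2) i.castSucc l =
          (R * (-1 / ((d:ℝ)+2))) * simplexPts (d+1) i ⟨k, hk⟩ := by
        intro i; simp [simplexPts, hk, hl, i.isLt, hR]; ring
      have h2 : simplexPts (d+2) (Fin.last (d+2)) k * simplexPts (d+2) (Fin.last (d+2)) l
          = 0 := by simp [simplexPts, hk]
      have hne : k ≠ l := fun h => hl (h ▸ hk)
      rw [h2, if_neg hne]; simp only [h1]
      rw [← Finset.mul_sum]
      have : ∑ i, simplexPts (d+1) i ⟨k, hk⟩ = 0 := by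
        have := colsum (d+1) ⟨k, hk⟩; exact this
      rw [this]; ring
    · have h1 : ∀ i : Fin (d+2),
          simplexPts (d+2) i.castSucc k * simplexPts (d+2) i.castSucc l =
          (R * (-1 / ((d:ℝ)+2))) * simplexPts (d+1) i ⟨l, hl⟩ := by
        intro i; simp [simplexPts, hk, hl, i.isLt, hR]; ring
      have h2 : simplexPts (d+2) (Fin.last (d+2)) k * simplexPts (d+2) (Fin.last (d+2)) l
          = 0 := by simp [simplexPts, hl]
      have hne : k ≠ l := fun h => hk (h ▸ hl)
      rw [h2, if_neg hne]; simp only [h1]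
      rw [← Finset.mul_sum]
      have : ∑ i, simplexPts (d+1) i ⟨l, hl⟩ = 0 := colsum (d+1) ⟨l, hl⟩
      rw [this]; ring
    · have hkl : k = l := Fin.ext (by omega)
      have h1 : ∀ i : Fin (d+2),
          simplexPts (d+2) i.castSucc k * simplexPts (d+2) i.castSucc l =
          (-1 / ((d:ℝ)+2))^2 := by
        intro i; simp [simplexPts, hk, hl, i.isLt]; ring
      have h2 : simplexPts (d+2) (Fin.last (d+2)) k * simplexPts (d+2) (Fin.last (d+2)) l
          = 1 := by simp [simplexPts, hk, hl]
      rw [h2, if_pos hkl]; simp only [h1]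
      rw [Finset.sum_const]
      simp only [Finset.card_univ, Fintype.card_fin, nsmul_eq_mul]
      push_cast
      field_simp
      ring

lemma gramRow : ∀ (d : ℕ), 1 ≤ d → ∀ (i j : Fin (d+1)),
    ∑ k, simplexPts d i k * simplexPts d j k = if i = j then 1 else -1/(d:ℝ)
  | 0, h, _, _ => absurd h (by norm_num)
  | 1, _, i, j => by
    fin_cases i <;> fin_cases j <;> simp [simplexPts, Fin.sum_univ_succ] <;> norm_num
  | (d+2), _, i, j => by
    set R := Real.sqrt (((d : ℝ) + 2) ^ 2 - 1) / ((d : ℝ) + 2) with hR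
    have hRsq : R ^ 2 = (((d:ℝ)+2)^2 - 1) / ((d:ℝ)+2)^2 := by
      rw [hR, div_pow, Rsq]
    have hd2 : ((d:ℝ)+2) ≠ 0 := by positivity
    have hd1 : ((d:ℝ)+1) ≠ 0 := by positivity
    rw [Fin.sum_univ_castSucc]
    by_cases hi : (i : ℕ) < d + 2 <;> by_cases hj : (j : ℕ) < d + 2
    · have h1 : ∀ k : Fin (d+1),
          simplexPts (d+2) i k.castSucc * simplexPts (d+2) j k.castSucc =
          R^2 * (simplexPts (d+1) ⟨i, hi⟩ k * simplexPts (d+1) ⟨j, hj⟩ k) := by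
        intro k; simp [simplexPts, hi, hj, k.isLt, hR]; ring
      have h2 : simplexPts (d+2) i (Fin.last (d+1)) * simplexPts (d+2) j (Fin.last (d+1))
          = (-1/((d:ℝ)+2))^2 := by simp [simplexPts, hi, hj]; ring
      rw [h2]; simp only [h1]
      rw [← Finset.mul_sum, gramRow (d+1) (by norm_num) ⟨i, hi⟩ ⟨j, hj⟩]
      have hij : (i = j) ↔ ((⟨i, hi⟩ : Fin (d+2)) = ⟨j, hj⟩) := by
        constructor <;> intro h
        · simp [h]
        · exact Fin.ext (by simpa using h)
      by_cases h : i = j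
      · rw [if_pos h, if_pos (hij.mp h), hRsq]
        push_cast; field_simp; try ring
      · rw [if_neg h, if_neg (fun hh => h (hij.mpr hh)), hRsq]
        push_cast; field_simp; try ring
    · have hjl : (j : ℕ) = d + 2 := by omega
      have h1 : ∀ k : Fin (d+1),
          simplexPts (d+2) i k.castSucc * simplexPts (d+2) j k.castSucc = 0 := by
        intro k; simp [simplexPts, hi, hj, k.isLt]
      have h2 : simplexPts (d+2) i (Fin.last (d+1)) * simplexPts (d+2) j (Fin.last (d+1))
          = -1/((d:ℝ)+2) := by simp [simplexPts, hi, hj]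
      have hne : i ≠ j := fun h => hj (h ▸ hi)
      rw [h2, if_neg hne]; simp only [h1]
      simp
    · have h1 : ∀ k : Fin (d+1),
          simplexPts (d+2) i k.castSucc * simplexPts (d+2) j k.castSucc = 0 := by
        intro k; simp [simplexPts, hi, hj, k.isLt]
      have h2 : simplexPts (d+2) i (Fin.last (d+1)) * simplexPts (d+2) j (Fin.last (d+1))
          = -1/((d:ℝ)+2) := by simp [simplexPts, hi, hj]
      have hne : i ≠ j := fun h => hi (h ▸ hj)
      rw [h2, if_neg hne]; simp only [h1]
      simp
    · have hij : i = j := Fin.ext (by omega)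
      have h1 : ∀ k : Fin (d+1),
          simplexPts (d+2) i k.castSucc * simplexPts (d+2) j k.castSucc = 0 := by
        intro k; simp [simplexPts, hi, hj, k.isLt]
      have h2 : simplexPts (d+2) i (Fin.last (d+1)) * simplexPts (d+2) j (Fin.last (d+1))
          = 1 := by simp [simplexPts, hi, hj]
      rw [h2, if_pos hij]; simp only [h1]
      simp

/-- for `K` the unit ball of `ℝ^d` and the degree-one Fekete points given by
the rows of `X_d`, the Lebesgue constant `Λ₁ = max_{‖y‖₂ ≤ 1} ∑ⱼ |λⱼ(y)|` satisfies
`√d ≤ Λ₁ ≤ √(d+1)` for every `d ≥ 1`. -/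
theorem sqrt_le_lebesgue_constant_le (d : ℕ) (hd : 1 ≤ d) :
    Real.sqrt d ≤
      sSup {t : ℝ | ∃ y : Fin d → ℝ, Real.sqrt (∑ k : Fin d, y k ^ 2) ≤ 1 ∧
        t = ∑ j : Fin (d + 1), |bary d y j|} ∧
    sSup {t : ℝ | ∃ y : Fin d → ℝ, Real.sqrt (∑ k : Fin d, y k ^ 2) ≤ 1 ∧
        t = ∑ j : Fin (d + 1), |bary d y j|} ≤ Real.sqrt ((d : ℝ) + 1) := by
  have hd1 : (1:ℝ) ≤ (d:ℝ) := by exact_mod_cast hd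
  have hd0 : (0:ℝ) < (d:ℝ) := by linarith
  have hdp : (0:ℝ) < (d:ℝ) + 1 := by linarith
  set S : Set ℝ := {t : ℝ | ∃ y : Fin d → ℝ, Real.sqrt (∑ k : Fin d, y k ^ 2) ≤ 1 ∧
        t = ∑ j : Fin (d + 1), |bary d y j|} with hS
  -- upper bound for every element
  have key : ∀ t ∈ S, t ≤ Real.sqrt ((d:ℝ)+1) := by
    rintro t ⟨y, hy, rfl⟩
    have hynn : (0:ℝ) ≤ ∑ k, y k ^ 2 := Finset.sum_nonneg fun k _ => sq_nonneg _
    have hy2 : ∑ k, y k ^ 2 ≤ 1 := by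
      nlinarith [Real.sq_sqrt hynn, Real.sqrt_nonneg (∑ k, y k ^ 2)]
    set m : Fin (d+1) → ℝ := fun j => (simplexPts d *ᵥ y) j with hm'
    have hmdef : ∀ j, m j = ∑ k, simplexPts d j k * y k := by
      intro j; simp [hm', Matrix.mulVec, dotProduct]
    have hm0 : ∑ j, m j = 0 := by
      simp_rw [hmdef]
      rw [Finset.sum_comm]
      have : ∀ k : Fin d, ∑ j, simplexPts d j k * y k = 0 := by
        intro k; rw [← Finset.sum_mul, colsum]; ring
      simp [this]
    have hmsq : ∑ j, m j ^ 2 = (((d:ℝ)+1)/d) * ∑ k, y k ^ 2 := by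
      simp_rw [hmdef]
      calc ∑ j, (∑ k, simplexPts d j k * y k) ^ 2
          = ∑ j, ∑ k, ∑ l, (simplexPts d j k * y k) * (simplexPts d j l * y l) := by
            simp_rw [sq, Finset.sum_mul_sum]
        _ = ∑ k, ∑ l, (y k * y l) * ∑ j, simplexPts d j k * simplexPts d j l := by
            rw [Finset.sum_comm]
            refine Finset.sum_congr rfl fun k _ => ?_
            rw [Finset.sum_comm]
            refine Finset.sum_congr rfl fun l _ => ?_
            rw [Finset.mul_sum]
            exact Finset.sum_congr rfl fun j _ => by ring
        _ = ∑ k, ∑ l, (y k * y l) * (if k = l then ((d:ℝ)+1)/d else 0) := by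
            simp_rw [gramCol]
        _ = ∑ k, (y k)^2 * (((d:ℝ)+1)/d) := by
            refine Finset.sum_congr rfl fun k _ => ?_
            rw [Finset.sum_eq_single k]
            · simp [sq]
            · intro l _ hl; simp [Ne.symm hl]
            · intro h; exact absurd (Finset.mem_univ k) h
        _ = (((d:ℝ)+1)/d) * ∑ k, y k ^ 2 := by rw [← Finset.sum_mul]; ring
    have hbary : ∀ j, bary d y j = 1/((d:ℝ)+1) + ((d:ℝ)/((d:ℝ)+1)) * m j := fun j => rfl
    have hsum2eq : ∑ j, (bary d y j)^2
        = 1/((d:ℝ)+1) + ((d:ℝ)/((d:ℝ)+1)) * ∑ k, y k ^ 2 := by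
      have expand : ∀ j, (bary d y j)^2 =
          (1/((d:ℝ)+1))^2 + (2*(1/((d:ℝ)+1))*((d:ℝ)/((d:ℝ)+1))) * m j
            + ((d:ℝ)/((d:ℝ)+1))^2 * (m j)^2 := by
        intro j; rw [hbary]; ring
      rw [Finset.sum_congr rfl fun j _ => expand j]
      rw [Finset.sum_add_distrib, Finset.sum_add_distrib, Finset.sum_const,
        ← Finset.mul_sum, ← Finset.mul_sum, hm0, hmsq]
      simp only [Finset.card_univ, Fintype.card_fin, nsmul_eq_mul, mul_zero, add_zero]
      push_cast
      field_simp
    have hsum2 : ∑ j, (bary d y j)^2 ≤ 1 := by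
      rw [hsum2eq]
      have h2 : ((d:ℝ)/((d:ℝ)+1)) * ∑ k, y k ^ 2 ≤ (d:ℝ)/((d:ℝ)+1) := by
        have : (0:ℝ) ≤ (d:ℝ)/((d:ℝ)+1) := by positivity
        nlinarith
      have : 1/((d:ℝ)+1) + (d:ℝ)/((d:ℝ)+1) = 1 := by field_simp; ring
      linarith
    have cauchy := Finset.sum_mul_sq_le_sq_mul_sq Finset.univ
      (fun j : Fin (d+1) => |bary d y j|) (fun _ => 1)
    simp only [mul_one, one_pow, Finset.sum_const, Finset.card_univ, Fintype.card_fin,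
      nsmul_eq_mul, sq_abs] at cauchy
    have habs : (∑ j, |bary d y j|)^2 ≤ (d:ℝ)+1 := by
      calc (∑ j, |bary d y j|)^2 ≤ (∑ j, (bary d y j)^2) * ((d:ℝ)+1) := by
            push_cast at cauchy; linarith
        _ ≤ (d:ℝ)+1 := by nlinarith
    have hnn : (0:ℝ) ≤ ∑ j, |bary d y j| := Finset.sum_nonneg fun j _ => abs_nonneg _
    calc ∑ j, |bary d y j| = Real.sqrt ((∑ j, |bary d y j|)^2) := (Real.sqrt_sq hnn).symm
      _ ≤ Real.sqrt ((d:ℝ)+1) := Real.sqrt_le_sqrt habs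
  have hbdd : BddAbove S := ⟨Real.sqrt ((d:ℝ)+1), key⟩
  have hne : S.Nonempty := ⟨∑ j : Fin (d+1), |bary d 0 j|, 0, by simp, rfl⟩
  refine ⟨?_, csSup_le hne key⟩
  -- lower bound
  set p : ℕ := (d+2)/2 with hp
  set ε : Fin (d+1) → ℝ := fun i => if (i:ℕ) < p then 1 else -1 with hε
  set s : ℝ := ∑ i, ε i with hs
  have hεsq : ∀ i, ε i ^ 2 = 1 := by
    intro i; by_cases h : (i:ℕ) < p <;> simp [hε, h]
  have hcount : ∑ i : Fin (d+1), (if (i:ℕ) < p then (1:ℝ) else 0) = p := by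
    rw [Fin.sum_univ_eq_sum_range (fun i => if i < p then (1:ℝ) else 0) (d+1),
      Finset.sum_ite, Finset.sum_const, Finset.sum_const]
    have hple : p ≤ d + 1 := by omega
    have : (Finset.range (d+1)).filter (· < p) = Finset.range p := by
      ext x; simp; omega
    simp [this]
  have hsval : s = 2*(p:ℝ) - ((d:ℝ)+1) := by
    have : ∀ i : Fin (d+1), ε i = 2*(if (i:ℕ) < p then (1:ℝ) else 0) - 1 := by
      intro i; by_cases h : (i:ℕ) < p <;> simp [hε, h] <;> norm_num
    rw [hs, Finset.sum_congr rfl fun i _ => this i, Finset.sum_sub_distrib,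
      ← Finset.mul_sum, hcount, Finset.sum_const]
    simp
  have hs01 : s = 0 ∨ s = 1 := by
    rcases Nat.even_or_odd d with h | h
    · right
      obtain ⟨c, hc⟩ := h
      have h2p : 2*p = d + 2 := by omega
      rw [hsval]
      have : (2:ℝ)*(p:ℝ) = (d:ℝ) + 2 := by exact_mod_cast h2p
      linarith
    · left
      obtain ⟨c, hc⟩ := h
      have h2p : 2*p = d + 1 := by omega
      rw [hsval]
      have : (2:ℝ)*(p:ℝ) = (d:ℝ) + 1 := by exact_mod_cast h2p
      linarith
  set w : Fin d → ℝ := fun k => ∑ i, ε i * simplexPts d i k with hw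
  set N : ℝ := ∑ k, w k ^ 2 with hN
  have hdN : (d:ℝ) * N = ((d:ℝ)+1)^2 - s^2 := by
    have hNval : N = (1+1/(d:ℝ))*((d:ℝ)+1) - s^2/(d:ℝ) := by
      have step1 : N = ∑ i, ∑ j, (ε i * ε j) * ∑ k, simplexPts d i k * simplexPts d j k := by
        rw [hN]
        simp_rw [hw, sq, Finset.sum_mul_sum]
        rw [Finset.sum_comm]
        refine Finset.sum_congr rfl fun i _ => ?_
        rw [Finset.sum_comm]
        refine Finset.sum_congr rfl fun j _ => ?_
        rw [Finset.mul_sum]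
        exact Finset.sum_congr rfl fun k _ => by ring
      rw [step1]
      simp_rw [gramRow d hd]
      have inner : ∀ i : Fin (d+1), ∑ j, (ε i * ε j) * (if i = j then (1:ℝ) else -1/(d:ℝ))
          = (1+1/(d:ℝ)) * (ε i)^2 - (1/(d:ℝ)) * (ε i * s) := by
        intro i
        have e : ∀ j : Fin (d+1), (ε i * ε j) * (if i = j then (1:ℝ) else -1/(d:ℝ))
            = (1+1/(d:ℝ)) * (if j = i then ε i * ε j else 0) - (1/(d:ℝ)) * (ε i * ε j) := by
          intro j; by_cases h : i = j
          · simp [h]; ring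
          · rw [if_neg h, if_neg (Ne.symm h)]; ring
        rw [Finset.sum_congr rfl fun j _ => e j, Finset.sum_sub_distrib,
          ← Finset.mul_sum, ← Finset.mul_sum, Finset.sum_ite_eq' Finset.univ i]
        simp only [Finset.mem_univ, if_true]
        rw [show ∑ j, ε i * ε j = ε i * s by rw [hs, Finset.mul_sum]]
        ring
      rw [Finset.sum_congr rfl fun i _ => inner i, Finset.sum_sub_distrib,
        ← Finset.mul_sum, ← Finset.mul_sum]
      rw [Finset.sum_congr rfl fun i _ => hεsq i, Finset.sum_const]
      rw [show ∑ i, ε i * s = s * s by rw [← Finset.sum_mul, ← hs]]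
      simp only [Finset.card_univ, Fintype.card_fin, nsmul_eq_mul]
      push_cast
      ring
    rw [hNval]
    field_simp
  have hssq : s^2 ≤ 1 := by rcases hs01 with h | h <;> rw [h] <;> norm_num
  have hNpos : 0 < N := by
    by_contra h
    push_neg at h
    have h1 : (d:ℝ) * N ≤ 0 := mul_nonpos_of_nonneg_of_nonpos hd0.le h
    nlinarith
  set y : Fin d → ℝ := fun k => w k / Real.sqrt N with hy
  have hsqrtN : (0:ℝ) < Real.sqrt N := Real.sqrt_pos.mpr hNpos
  have hysum : ∑ k, y k ^ 2 = 1 := by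
    simp_rw [hy, div_pow]
    rw [← Finset.sum_div, Real.sq_sqrt hNpos.le, ← hN]
    exact div_self hNpos.ne'
  have hmem : (∑ j : Fin (d+1), |bary d y j|) ∈ S := by
    exact ⟨y, by rw [hysum]; simp, rfl⟩
  refine le_trans ?_ (le_csSup hbdd hmem)
  -- value estimate
  have hlow : s/((d:ℝ)+1) + ((d:ℝ)/((d:ℝ)+1)) * Real.sqrt N ≤ ∑ j, |bary d y j| := by
    have step : ∑ j, ε j * bary d y j = s/((d:ℝ)+1) + ((d:ℝ)/((d:ℝ)+1)) * Real.sqrt N := by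
      have hbary : ∀ j, bary d y j
          = 1/((d:ℝ)+1) + ((d:ℝ)/((d:ℝ)+1)) * ∑ k, simplexPts d j k * y k := by
        intro j; simp [bary, Matrix.mulVec, dotProduct]
      have hmsum : ∑ j, ε j * ∑ k, simplexPts d j k * y k = Real.sqrt N := by
        simp_rw [Finset.mul_sum]
        rw [Finset.sum_comm]
        have inner : ∀ k : Fin d, ∑ j, ε j * (simplexPts d j k * y k) = w k ^2 / Real.sqrt N := by
          intro k
          have : ∑ j, ε j * (simplexPts d j k * y k) = (∑ j, ε j * simplexPts d j k) * y k := by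
            rw [Finset.sum_mul]; exact Finset.sum_congr rfl fun j _ => by ring
          rw [this]
          simp only [hw, hy]
          ring
        rw [Finset.sum_congr rfl fun k _ => inner k, ← Finset.sum_div, ← hN]
        exact Real.div_sqrt
      rw [Finset.sum_congr rfl fun j _ => by rw [hbary j]]
      simp_rw [mul_add]
      rw [Finset.sum_add_distrib]
      rw [show ∑ j, ε j * (1/((d:ℝ)+1)) = s/((d:ℝ)+1) by
        rw [← Finset.sum_mul, ← hs]; ring]
      congr 1
      rw [← hmsum, Finset.mul_sum]
      exact Finset.sum_congr rfl fun j _ => by ring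
    rw [← step]
    refine Finset.sum_le_sum fun j _ => ?_
    by_cases h : (j:ℕ) < p
    · simp only [hε, if_pos h, one_mul]; exact le_abs_self _
    · simp only [hε, if_neg h, neg_one_mul]; exact neg_le_abs _
  refine le_trans ?_ hlow
  clear hlow hmem hysum hcount hsval hεsq hsqrtN hy hw hε hp hS hbdd hne key hs hN
  clear_value s N y w ε p
  clear p ε w y
  -- final numeric inequality
  set u : ℝ := Real.sqrt N with hu
  have hu0 : 0 ≤ u := Real.sqrt_nonneg N
  have hu2 : u^2 = N := Real.sq_sqrt hNpos.le
  set v : ℝ := Real.sqrt d with hv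
  have hv2 : v^2 = (d:ℝ) := Real.sq_sqrt hd0.le
  have hv1 : 1 ≤ v := by
    rw [hv, show (1:ℝ) = Real.sqrt 1 by simp]
    exact Real.sqrt_le_sqrt hd1
  have key2 : (d:ℝ) * u^2 = ((d:ℝ)+1)^2 - s^2 := by rw [hu2]; exact hdN
  clear_value u v
  have h3 : ((d:ℝ)+1) * v ≤ s + (d:ℝ) * u := by
    rcases hs01 with h | h
    · rw [h, zero_add]
      have heq : (((d:ℝ)+1) * v)^2 = ((d:ℝ)*u)^2 := by
        rw [h] at key2
        linear_combination ((d:ℝ)+1)^2 * hv2 - (d:ℝ) * key2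
      have : ((d:ℝ)+1) * v = (d:ℝ) * u := by
        have h1 : ((d:ℝ)+1)*v = Real.sqrt ((((d:ℝ)+1)*v)^2) := (Real.sqrt_sq (by positivity)).symm
        rw [h1, heq, Real.sqrt_sq (by positivity)]
      linarith
    · rw [h] at key2 ⊢
      by_contra hlt
      push_neg at hlt
      have e : (((d:ℝ)+1)*v - (d:ℝ)*u) * (((d:ℝ)+1)*v + (d:ℝ)*u) = (d:ℝ) := by
        linear_combination ((d:ℝ)+1)^2 * hv2 - (d:ℝ) * key2
      have hA : ((d:ℝ)+1)*v - (d:ℝ)*u > 1 := by linarith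
      have hB : ((d:ℝ)+1)*v + (d:ℝ)*u ≥ (d:ℝ)+1 := by
        nlinarith [mul_nonneg (show (0:ℝ) ≤ (d:ℝ)+1 by linarith)
          (show (0:ℝ) ≤ v - 1 by linarith), mul_nonneg hd0.le hu0]
      nlinarith [mul_pos (show (0:ℝ) < ((d:ℝ)+1)*v - (d:ℝ)*u - 1 by linarith)
        (show (0:ℝ) < ((d:ℝ)+1)*v + (d:ℝ)*u by linarith)]
  calc v = (((d:ℝ)+1) * v)/((d:ℝ)+1) := by field_simp
    _ ≤ (s + (d:ℝ)*u)/((d:ℝ)+1) := by gcongr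
    _ = s/((d:ℝ)+1) + ((d:ℝ)/((d:ℝ)+1)) * u := by ring
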